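/- For every real number r > 1, the set E_r := {λ > 0 : ‖λ rⁿ‖ ≤ 1/(r−1) for all n ∈ ℕ} is uncountable. -/

import Mathlib

open Filter Topology

/-- Auxiliary integer sequence: `a 0 = 1`, `a (n+1)` is `⌊a n * r⌋` or `⌊a n * r⌋ + 1`
according to the bit `s n`. -/
noncomputable def aS (r : ℝ) (s : ℕ → Bool) : ℕ → ℤ
  | 0 => 1
  | n + 1 => ⌊(aS r s n : ℝ) * r⌋ + (if s n then 1 else 0)

lemma aS_dist (r : ℝ) (s : ℕ → Bool) (n : ℕ) :
    |((aS r s (n + 1) : ℤ) : ℝ) - (aS r s n : ℝ) * r| ≤ 1 := by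
  have h1 := Int.floor_le ((aS r s n : ℝ) * r)
  have h2 := Int.lt_floor_add_one ((aS r s n : ℝ) * r)
  show |((⌊(aS r s n : ℝ) * r⌋ + (if s n then 1 else 0) : ℤ) : ℝ) - _| ≤ 1
  rcases s n with _ | _ <;> simp <;> rw [abs_le] <;> constructor <;> push_cast <;> linarith

lemma not_countable_bool_seq : ¬ Countable (ℕ → Bool) := by
  intro h
  have h1 : Cardinal.mk (ℕ → Bool) ≤ Cardinal.aleph0 := Cardinal.mk_le_aleph0_iff.mpr h
  have h2 : Cardinal.mk (ℕ → Bool) = Cardinal.continuum := by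
    rw [Cardinal.mk_arrow]
    simp [Cardinal.two_power_aleph0]
  rw [h2] at h1
  exact absurd h1 Cardinal.aleph0_lt_continuum.not_ge

theorem stmt_4 (r : ℝ) (hr : 1 < r) :
    ¬ Set.Countable
      {lam : ℝ | 0 < lam ∧
        ∀ n : ℕ, |lam * r ^ n - round (lam * r ^ n)| ≤ 1 / (r - 1)} := by
  set E : Set ℝ := {lam : ℝ | 0 < lam ∧
        ∀ n : ℕ, |lam * r ^ n - round (lam * r ^ n)| ≤ 1 / (r - 1)} with hE
  rcases le_or_gt r 3 with hr3 | hr3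
  · -- trivial case: 1/(r-1) ≥ 1/2 so the condition always holds
    have hsub : Set.Ioi (0 : ℝ) ⊆ E := by
      intro x hx
      refine ⟨hx, fun n => ?_⟩
      have h1 : |x * r ^ n - round (x * r ^ n)| ≤ 1 / 2 := abs_sub_round _
      have h2 : (1 : ℝ) / 2 ≤ 1 / (r - 1) := by
        rw [div_le_div_iff₀ (by norm_num) (by linarith)]
        linarith
      linarith
    intro hc
    have hci : Countable (Set.Ioi (0 : ℝ)) :=
      Set.countable_coe_iff.mpr (hc.mono hsub)
    have := Cardinal.mk_le_aleph0_iff.mpr hci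
    rw [Cardinal.mk_Ioi_real] at this
    exact absurd (lt_of_lt_of_le Cardinal.aleph0_lt_continuum this) (lt_irrefl _)
  · -- main case: r > 3
    have hr0 : (0 : ℝ) < r := by linarith
    have hrn : ∀ n : ℕ, (0 : ℝ) < r ^ n := fun n => pow_pos hr0 n
    set f : (ℕ → Bool) → ℕ → ℝ := fun s n => (aS r s n : ℝ) / r ^ n with hf
    have hdist : ∀ s n, dist (f s n) (f s (n + 1)) ≤ (1 / r) * (1 / r) ^ n := by
      intro s n
      rw [Real.dist_eq]
      have key : f s n - f s (n + 1)
          = ((aS r s n : ℝ) * r - (aS r s (n + 1) : ℝ)) / r ^ (n + 1) := by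
        simp only [hf]
        field_simp
        ring
      rw [key, abs_div, abs_of_pos (hrn (n + 1))]
      have h1 : |(aS r s n : ℝ) * r - (aS r s (n + 1) : ℝ)| ≤ 1 := by
        rw [abs_sub_comm]; exact aS_dist r s n
      have h2 : (1 / r) * (1 / r) ^ n = 1 / r ^ (n + 1) := by
        rw [div_pow, one_pow, pow_succ]
        field_simp
      rw [h2]
      gcongr
    have hrr : (1 : ℝ) / r < 1 := by
      rw [div_lt_one hr0]; linarith
    have hcauchy : ∀ s, CauchySeq (f s) := fun s =>
      cauchySeq_of_le_geometric (1 / r) (1 / r) hrr (hdist s)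
    -- limits
    have hlim : ∀ s : ℕ → Bool, ∃ l : ℝ, Tendsto (f s) atTop (𝓝 l) := fun s =>
      cauchySeq_tendsto_of_complete (hcauchy s)
    choose g hg using hlim
    -- distance from each term to the limit
    have hbd : ∀ s n, |g s * r ^ n - (aS r s n : ℝ)| ≤ 1 / (r - 1) := by
      intro s n
      have h := dist_le_of_le_geometric_of_tendsto (1 / r) (1 / r) hrr (hdist s) (hg s) n
      rw [Real.dist_eq] at h
      have key : g s * r ^ n - (aS r s n : ℝ) = (g s - f s n) * r ^ n := by
        simp only [hf]
        field_simp
      rw [key, abs_mul, abs_of_pos (hrn n), abs_sub_comm]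
      calc |f s n - g s| * r ^ n ≤ (1 / r * (1 / r) ^ n / (1 - 1 / r)) * r ^ n := by
            apply mul_le_mul_of_nonneg_right h (le_of_lt (hrn n))
        _ = 1 / (r - 1) := by
            have h0 : r ≠ 0 := hr0.ne'
            have h1 : r - 1 ≠ 0 := by intro h; apply absurd hr; linarith [sub_eq_zero.mp h]
            have h1' : 1 - 1 / r ≠ 0 := by
              intro h
              have hq : (1 : ℝ) / r = 1 := by linarith
              rw [hq] at hrr
              exact lt_irrefl 1 hrr
            have hn0 : (r : ℝ) ^ n ≠ 0 := (hrn n).ne'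
            rw [div_pow, one_pow]
            field_simp
    have hhalf : 1 / (r - 1) < (1 : ℝ) / 2 := by
      rw [div_lt_div_iff₀ (by linarith) (by norm_num)]
      linarith
    -- membership
    have hmem : ∀ s, g s ∈ E := by
      intro s
      constructor
      · have h0 := hbd s 0
        simp only [pow_zero, mul_one] at h0
        have : (aS r s 0 : ℝ) = 1 := by norm_num [aS]
        rw [this] at h0
        have := abs_le.mp h0
        linarith [this.1, hhalf]
      · intro n
        exact (round_le (g s * r ^ n) (aS r s n)).trans (hbd s n)
    -- injectivity
    have hround : ∀ s n, aS r s n = round (g s * r ^ n) := by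
      intro s n
      have h1 := hbd s n
      have h2 : |g s * r ^ n - round (g s * r ^ n)| ≤ 1 / (r - 1) :=
        (round_le (g s * r ^ n) (aS r s n)).trans h1
      have h3 : |((aS r s n : ℝ)) - (round (g s * r ^ n) : ℝ)| < 1 := by
        have := abs_sub_abs_le_abs_sub ((aS r s n : ℝ)) ((round (g s * r ^ n) : ℝ))
        calc |((aS r s n : ℝ)) - (round (g s * r ^ n) : ℝ)|
            ≤ |(aS r s n : ℝ) - g s * r ^ n| + |g s * r ^ n - (round (g s * r ^ n) : ℝ)| := by
              have := abs_sub_le ((aS r s n : ℝ)) (g s * r ^ n) ((round (g s * r ^ n) : ℝ))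
              exact this
          _ < 1 := by
              rw [abs_sub_comm] at h1
              linarith [h1, h2, hhalf]
      have h4 : |aS r s n - round (g s * r ^ n)| < 1 := by exact_mod_cast h3
      rw [abs_lt] at h4
      omega
    have hinj : Function.Injective g := by
      intro s t hst
      have haeq : ∀ n, aS r s n = aS r t n := by
        intro n
        rw [hround s n, hround t n, hst]
      funext n
      have h1 := haeq (n + 1)
      show s n = t n
      have : (⌊(aS r s n : ℝ) * r⌋ + (if s n then 1 else 0) : ℤ)
           = (⌊(aS r t n : ℝ) * r⌋ + (if t n then 1 else 0) : ℤ) := h1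
      rw [haeq n] at this
      have hif : (if s n then (1 : ℤ) else 0) = (if t n then 1 else 0) :=
        add_left_cancel this
      cases hsn : s n <;> cases htn : t n <;> simp [hsn, htn] at hif ⊢
    -- conclusion
    intro hc
    have hsub : Set.range g ⊆ E := by
      rintro _ ⟨s, rfl⟩; exact hmem s
    have hcr : (Set.range g).Countable := hc.mono hsub
    have : Countable (ℕ → Bool) := by
      have := hcr.to_subtype
      exact (Equiv.ofInjective g hinj).countable_iff.mpr this
    exact not_countable_bool_seq this
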